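/- Let h be a polynomial in n real variables with homogeneous components φ_k, and let d ∈ ℝ^n. Suppose μ ≥ 2 is such that φ_μ(d) < 0 and φ_k(d) = 0 for all k > μ. Then h(t·d)/t tends to −∞ as t → ∞ (i.e., the asymptotic value of h along the ray through d is −∞). -/

import Mathlib

open MvPolynomial Filter

lemma hom_eval_smul {n k : ℕ} {p : MvPolynomial (Fin n) ℝ} (hp : p.IsHomogeneous k)
    (t : ℝ) (d : Fin n → ℝ) : eval (t • d) p = t ^ k * eval d p := by
  rw [eval_eq', eval_eq', Finset.mul_sum]
  apply Finset.sum_congr rfl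
  intro m hm
  have hdeg : ∑ i, m i = k := by
    have := hp (MvPolynomial.mem_support_iff.mp hm)
    simpa [Finsupp.weight, Finsupp.sum_fintype,
      Finsupp.linearCombination] using this
  calc coeff m p * ∏ i, (t • d) i ^ m i
      = coeff m p * ∏ i, (t ^ m i * d i ^ m i) := by
        simp [Pi.smul_apply, smul_eq_mul, mul_pow]
    _ = coeff m p * ((∏ i, t ^ m i) * ∏ i, d i ^ m i) := by
        rw [Finset.prod_mul_distrib]
    _ = t ^ k * (coeff m p * ∏ i, d i ^ m i) := by
        rw [Finset.prod_pow_eq_pow_sum, hdeg]; ring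

theorem stmt_2 (n : ℕ) (h : MvPolynomial (Fin n) ℝ) (d : Fin n → ℝ) (μ : ℕ)
    (hμ : 2 ≤ μ)
    (hneg : MvPolynomial.eval d (MvPolynomial.homogeneousComponent μ h) < 0)
    (hvan : ∀ k, μ < k → MvPolynomial.eval d (MvPolynomial.homogeneousComponent k h) = 0) :
    Filter.Tendsto (fun t : ℝ => MvPolynomial.eval (t • d) h / t) Filter.atTop Filter.atBot := by
  set N := h.totalDegree with hN
  set a : ℕ → ℝ := fun k => eval d (homogeneousComponent k h) with ha
  have key : ∀ t : ℝ, eval (t • d) h = ∑ k ∈ Finset.range (N + 1), t ^ k * a k := by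
    intro t
    conv_lhs => rw [← h.sum_homogeneousComponent]
    rw [map_sum]
    exact Finset.sum_congr rfl fun k _ =>
      hom_eval_smul (homogeneousComponent_isHomogeneous k h) t d
  have hμN : μ ≤ N := by
    by_contra hc
    push_neg at hc
    rw [homogeneousComponent_eq_zero μ h hc, map_zero] at hneg
    exact lt_irrefl 0 hneg
  set q : Polynomial ℝ := ∑ k ∈ Finset.range μ, Polynomial.C (a (k + 1)) * Polynomial.X ^ k
    with hq
  have hcoeff : ∀ j, q.coeff j = if j < μ then a (j + 1) else 0 := by
    intro j
    rw [hq, Polynomial.finset_sum_coeff]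
    simp only [Polynomial.coeff_C_mul, Polynomial.coeff_X_pow, mul_ite, mul_one, mul_zero]
    by_cases hj : j < μ
    · rw [Finset.sum_eq_single j (fun b _ hb => by simp [Ne.symm hb]) (by simp [hj])]
      simp [hj]
    · rw [if_neg hj]
      apply Finset.sum_eq_zero
      intro k hk
      rw [if_neg]
      intro hkj
      exact hj (hkj ▸ Finset.mem_range.mp hk)
  have hμ0 : 0 < μ := by omega
  have hcμ : q.coeff (μ - 1) = a μ := by
    rw [hcoeff]
    simp only [if_pos (by omega : μ - 1 < μ)]
    congr 1
    omega
  have haμ : a μ < 0 := hneg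
  have hnd : q.natDegree = μ - 1 := by
    apply le_antisymm
    · apply Polynomial.natDegree_sum_le_of_forall_le
      intro k hk
      refine (Polynomial.natDegree_C_mul_le _ _).trans ?_
      simpa using Nat.le_sub_one_of_lt (Finset.mem_range.mp hk)
    · exact Polynomial.le_natDegree_of_ne_zero (hcμ ▸ ne_of_lt haμ)
  have hq0 : q ≠ 0 := fun h0 => by simp [h0] at hcμ; exact ne_of_lt haμ hcμ.symm
  have hdeg : 0 < q.degree := by
    rw [Polynomial.degree_eq_natDegree hq0, hnd]
    exact_mod_cast (by omega : 0 < μ - 1)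
  have hlc : q.leadingCoeff ≤ 0 := by
    rw [Polynomial.leadingCoeff, hnd, hcμ]
    exact le_of_lt haμ
  have hqbot : Tendsto (fun t => q.eval t) atTop atBot :=
    Polynomial.tendsto_atBot_of_leadingCoeff_nonpos q hdeg hlc
  have heval : ∀ t : ℝ, q.eval t = ∑ k ∈ Finset.range μ, a (k + 1) * t ^ k := by
    intro t
    rw [hq, Polynomial.eval_finset_sum]
    simp
  have hzero : Tendsto (fun t : ℝ => a 0 / t) atTop (nhds 0) :=
    tendsto_const_nhds.div_atTop tendsto_id
  have hsum : Tendsto (fun t : ℝ => a 0 / t + q.eval t) atTop atBot := by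
    apply tendsto_atBot_add_left_of_ge' atTop 1 _ hqbot
    filter_upwards [hzero.eventually (eventually_le_nhds (by norm_num : (0:ℝ) < 1))] with t ht
    exact ht
  apply hsum.congr'
  filter_upwards [eventually_gt_atTop (0 : ℝ)] with t ht
  have ht0 : t ≠ 0 := ne_of_gt ht
  rw [heval, key t, Finset.sum_range_succ']
  have hsub : ∑ k ∈ Finset.range N, t ^ (k + 1) * a (k + 1)
      = ∑ k ∈ Finset.range μ, t ^ (k + 1) * a (k + 1) := by
    symm
    apply Finset.sum_subset (Finset.range_subset_range.mpr hμN)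
    intro k _ hk
    rw [Finset.mem_range, not_lt] at hk
    have h0 : a (k + 1) = 0 := hvan (k + 1) (by omega)
    rw [h0, mul_zero]
  rw [hsub]
  rw [add_div, Finset.sum_div]
  rw [pow_zero, one_mul, add_comm]
  congr 1
  apply Finset.sum_congr rfl
  intro k _
  rw [pow_succ]
  field_simp
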